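/- Let λ_* ∈ I be the unique minimizer of G. Then λ_* < σ if and only if one of the following holds: σ = ∞; or σ < ∞ and A(σ) = ∞; or σ < ∞, A(σ) < ∞ and T(σ) < m (including the case T(σ) = −∞); and in this case G'(λ_*) = 0. Correspondingly, λ_* = σ if and only if σ < ∞, A(σ) < ∞ and T(σ) is finite with m ≤ T(σ); and in this case lim_{λ→σ−} G'(λ) = (m − T(σ))/σ² ≤ 0. -/

import Mathlib

open MeasureTheory Real Set Filter Topology

noncomputable section

/-- The set of positive exponents at which the bilateral Laplace transform of `f`
converges absolutely. -/
def lapSet (f : ℝ → ℝ) : Set ℝ :=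
  {l : ℝ | 0 < l ∧ Integrable (fun s => f s * Real.exp (l * s))}

/-- The abscissa of convergence of the bilateral Laplace transform of `f`,
as an extended real number. -/
def lapAbsc (f : ℝ → ℝ) : EReal :=
  sSup ((fun l : ℝ => (l : EReal)) '' lapSet f)

/-- `G(λ) = (κ⁺ A(λ) - m)/λ` where `A(λ) = ∫ a(s) e^{λ s} ds`. -/
def Gfun (κp m : ℝ) (a : ℝ → ℝ) (l : ℝ) : ℝ :=
  (κp * (∫ s, a s * Real.exp (l * s)) - m) / l

/-- `T(λ) = κ⁺ ∫ (1 - λ s) a(s) e^{λ s} ds`. -/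
def Tfun (κp : ℝ) (a : ℝ → ℝ) (l : ℝ) : ℝ :=
  κp * ∫ s, (1 - l * s) * a s * Real.exp (l * s)

/-- Class `V`: `σ(a) = ∞`, or `σ(a) < ∞` with `A(σ) = ∞`, or `σ(a) < ∞`, `A(σ) < ∞`
and `T(σ) < m` (including `T(σ) = -∞`, i.e. non-convergence). -/
def VClass (κp m : ℝ) (a : ℝ → ℝ) : Prop :=
  lapAbsc a = ⊤ ∨
  (lapAbsc a < ⊤ ∧
    ¬ Integrable (fun s => a s * Real.exp ((lapAbsc a).toReal * s))) ∨
  (lapAbsc a < ⊤ ∧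
    Integrable (fun s => a s * Real.exp ((lapAbsc a).toReal * s)) ∧
    (¬ Integrable
        (fun s => (1 - (lapAbsc a).toReal * s) * a s * Real.exp ((lapAbsc a).toReal * s)) ∨
      Tfun κp a (lapAbsc a).toReal < m))

/-- Class `W`: `σ(a) < ∞`, `A(σ) < ∞`, `T(σ)` converges to a finite value and
`m ≤ T(σ)`. -/
def WClass (κp m : ℝ) (a : ℝ → ℝ) : Prop :=
  lapAbsc a < ⊤ ∧
  Integrable (fun s => a s * Real.exp ((lapAbsc a).toReal * s)) ∧
  Integrable
    (fun s => (1 - (lapAbsc a).toReal * s) * a s * Real.exp ((lapAbsc a).toReal * s)) ∧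
  m ≤ Tfun κp a (lapAbsc a).toReal

namespace MVA

variable {a : ℝ → ℝ}

lemma exp_le_add {l₁ l c : ℝ} (h₁ : l₁ ≤ l) (h₂ : l ≤ c) (s : ℝ) :
    Real.exp (l * s) ≤ Real.exp (l₁ * s) + Real.exp (c * s) := by
  rcases le_or_gt s 0 with hs | hs
  · calc Real.exp (l * s) ≤ Real.exp (l₁ * s) :=
          Real.exp_le_exp.2 (mul_le_mul_of_nonpos_right h₁ hs)
    _ ≤ _ := le_add_of_nonneg_right (Real.exp_pos _).le
  · calc Real.exp (l * s) ≤ Real.exp (c * s) :=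
          Real.exp_le_exp.2 (mul_le_mul_of_nonneg_right h₂ hs.le)
    _ ≤ _ := le_add_of_nonneg_left (Real.exp_pos _).le

lemma aesm_mul_exp (ha : Integrable a) (l : ℝ) :
    AEStronglyMeasurable (fun s => a s * Real.exp (l * s)) volume :=
  ha.aestronglyMeasurable.mul
    (Real.continuous_exp.comp (continuous_const.mul continuous_id)).aestronglyMeasurable

lemma mem_lapSet_of_le (ha : Integrable a) (hnn : ∀ s, 0 ≤ a s) {l c : ℝ}
    (hc : c ∈ lapSet a) (hl : 0 < l) (hlc : l ≤ c) : l ∈ lapSet a := by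
  refine ⟨hl, (ha.add hc.2).mono (aesm_mul_exp ha l) (ae_of_all _ fun s => ?_)⟩
  have hb := exp_le_add hl.le hlc s
  rw [zero_mul, Real.exp_zero] at hb
  calc ‖a s * Real.exp (l * s)‖ = a s * Real.exp (l * s) := by
        rw [Real.norm_eq_abs, abs_of_nonneg (mul_nonneg (hnn s) (Real.exp_pos _).le)]
  _ ≤ a s * (1 + Real.exp (c * s)) := mul_le_mul_of_nonneg_left hb (hnn s)
  _ = a s + a s * Real.exp (c * s) := by ring
  _ ≤ ‖a s + a s * Real.exp (c * s)‖ := by rw [Real.norm_eq_abs]; exact le_abs_self _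

lemma abs_mul_exp_le {l c : ℝ} (hl : 0 < l) (hlc : l < c) (s : ℝ) :
    |s| * Real.exp (l * s) ≤ Real.exp (c * s) / (c - l) + 1 / l := by
  rcases le_or_gt 0 s with hs | hs
  · rw [abs_of_nonneg hs]
    have h1 : s ≤ Real.exp ((c - l) * s) / (c - l) := by
      rw [le_div_iff₀ (by linarith)]
      nlinarith [Real.add_one_le_exp ((c - l) * s), mul_nonneg (sub_nonneg.2 hlc.le) hs]
    have h2 : s * Real.exp (l * s) ≤ Real.exp (c * s) / (c - l) := by
      calc s * Real.exp (l * s) ≤ Real.exp ((c - l) * s) / (c - l) * Real.exp (l * s) :=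
            mul_le_mul_of_nonneg_right h1 (Real.exp_pos _).le
      _ = Real.exp (c * s) / (c - l) := by
            rw [div_mul_eq_mul_div, ← Real.exp_add]; ring_nf
    linarith [one_div_pos.2 hl]
  · rw [abs_of_neg hs]
    have h1 : l * -s ≤ Real.exp (l * -s) := by linarith [Real.add_one_le_exp (l * -s)]
    have h2 : l * -s * Real.exp (l * s) ≤ 1 := by
      calc l * -s * Real.exp (l * s) ≤ Real.exp (l * -s) * Real.exp (l * s) :=
            mul_le_mul_of_nonneg_right h1 (Real.exp_pos _).le
      _ = 1 := by rw [← Real.exp_add]; ring_nf; exact Real.exp_zero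
    have h3 : -s * Real.exp (l * s) ≤ 1 / l := by
      rw [le_div_iff₀ hl]
      calc -s * Real.exp (l * s) * l = l * -s * Real.exp (l * s) := by ring
      _ ≤ 1 := h2
    have h4 : 0 ≤ Real.exp (c * s) / (c - l) :=
      div_nonneg (Real.exp_pos _).le (by linarith)
    linarith

lemma integrable_abs_mul_exp (ha : Integrable a) (hnn : ∀ s, 0 ≤ a s) {l c : ℝ}
    (hl : 0 < l) (hlc : l < c) (hc : c ∈ lapSet a) :
    Integrable (fun s => |s| * a s * Real.exp (l * s)) := by
  have hbint : Integrable (fun s => (1 / (c - l)) * (a s * Real.exp (c * s)) + (1 / l) * a s) :=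
    (hc.2.const_mul _).add (ha.const_mul _)
  refine hbint.mono
    ((continuous_abs.aestronglyMeasurable.mul ha.aestronglyMeasurable).mul
      (Real.continuous_exp.comp (continuous_const.mul continuous_id)).aestronglyMeasurable)
    (ae_of_all _ fun s => ?_)
  have hb := abs_mul_exp_le hl hlc s
  have hnn2 : (0:ℝ) ≤ |s| * a s * Real.exp (l * s) :=
    mul_nonneg (mul_nonneg (abs_nonneg _) (hnn s)) (Real.exp_pos _).le
  calc ‖|s| * a s * Real.exp (l * s)‖ = a s * (|s| * Real.exp (l * s)) := by
        rw [Real.norm_eq_abs, abs_of_nonneg hnn2]; ring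
  _ ≤ a s * (Real.exp (c * s) / (c - l) + 1 / l) := mul_le_mul_of_nonneg_left hb (hnn s)
  _ = 1 / (c - l) * (a s * Real.exp (c * s)) + 1 / l * a s := by ring
  _ ≤ ‖1 / (c - l) * (a s * Real.exp (c * s)) + 1 / l * a s‖ := by
        rw [Real.norm_eq_abs]; exact le_abs_self _

lemma integrable_mul_exp (ha : Integrable a) (hnn : ∀ s, 0 ≤ a s) {l c : ℝ}
    (hl : 0 < l) (hlc : l < c) (hc : c ∈ lapSet a) :
    Integrable (fun s => s * a s * Real.exp (l * s)) := by
  refine (integrable_abs_mul_exp ha hnn hl hlc hc).mono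
    ((aestronglyMeasurable_id.mul ha.aestronglyMeasurable).mul
      (Real.continuous_exp.comp (continuous_const.mul continuous_id)).aestronglyMeasurable)
    (ae_of_all _ fun s => ?_)
  rw [Real.norm_eq_abs, Real.norm_eq_abs, abs_mul, abs_mul, abs_mul, abs_mul, abs_abs]

lemma integrable_Tint (ha : Integrable a) (hnn : ∀ s, 0 ≤ a s) {l c : ℝ}
    (hl : 0 < l) (hlc : l < c) (hc : c ∈ lapSet a) :
    Integrable (fun s => (1 - l * s) * a s * Real.exp (l * s)) := by
  have h1 := (mem_lapSet_of_le ha hnn hc hl hlc.le).2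
  have h2 := (integrable_mul_exp ha hnn hl hlc hc).const_mul l
  exact (h1.sub h2).congr (ae_of_all _ fun s => by simp only [Pi.sub_apply]; ring)

lemma Tfun_eq (κp : ℝ) {l : ℝ}
    (hAl : Integrable (fun s => a s * Real.exp (l * s)))
    (hsl : Integrable (fun s => s * a s * Real.exp (l * s))) :
    Tfun κp a l =
      κp * ((∫ s, a s * Real.exp (l * s)) - l * ∫ s, s * a s * Real.exp (l * s)) := by
  unfold Tfun
  congr 1
  rw [← integral_const_mul, ← integral_sub hAl (hsl.const_mul l)]
  exact integral_congr_ae (ae_of_all _ fun s => by ring)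

lemma hasDerivAt_A (ha : Integrable a) (hnn : ∀ s, 0 ≤ a s) {l c : ℝ}
    (hl : 0 < l) (hlc : l < c) (hc : c ∈ lapSet a) :
    HasDerivAt (fun x => ∫ s, a s * Real.exp (x * s))
      (∫ s, s * a s * Real.exp (l * s)) l := by
  set ε := min ((c - l) / 2) (l / 2) with hε
  have hε0 : 0 < ε := lt_min (by linarith) (by linarith)
  have hball : ∀ x ∈ Metric.ball l ε, l / 2 ≤ x ∧ x ≤ (l + c) / 2 := by
    intro x hx
    rw [Metric.mem_ball, Real.dist_eq] at hx
    have h1 := abs_lt.1 hx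
    have h2 := min_le_left ((c - l) / 2) (l / 2)
    have h3 := min_le_right ((c - l) / 2) (l / 2)
    constructor <;> linarith
  have half1 : (0:ℝ) < l / 2 := by linarith
  have half1c : l / 2 < c := by linarith
  have half2 : (0:ℝ) < (l + c) / 2 := by linarith
  have half2c : (l + c) / 2 < c := by linarith
  have key := hasDerivAt_integral_of_dominated_loc_of_deriv_le (μ := volume)
    (F := fun x s => a s * Real.exp (x * s))
    (F' := fun x s => s * (a s * Real.exp (x * s)))
    (bound := fun s => |s| * a s * Real.exp (l / 2 * s) + |s| * a s * Real.exp ((l + c) / 2 * s))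
    (Metric.ball_mem_nhds l hε0)
    (Eventually.of_forall fun x => aesm_mul_exp ha x)
    (mem_lapSet_of_le ha hnn hc hl hlc.le).2
    ((aestronglyMeasurable_id.mul ((aesm_mul_exp ha l))))
    (ae_of_all _ fun s x hx => ?_)
    (((integrable_abs_mul_exp ha hnn half1 half1c hc).add
        (integrable_abs_mul_exp ha hnn half2 half2c hc)))
    (ae_of_all _ fun s x _ => ?_)
  · have := key.2
    refine this.congr_deriv (integral_congr_ae (ae_of_all _ fun s => by ring))
  · -- bound
    obtain ⟨hx1, hx2⟩ := hball x hx
    have hb := exp_le_add hx1 hx2 s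
    have hnn2 : (0:ℝ) ≤ a s * Real.exp (x * s) :=
      mul_nonneg (hnn s) (Real.exp_pos _).le
    calc ‖s * (a s * Real.exp (x * s))‖ = |s| * (a s * Real.exp (x * s)) := by
          rw [Real.norm_eq_abs, abs_mul, abs_of_nonneg hnn2]
    _ ≤ |s| * (a s * (Real.exp (l / 2 * s) + Real.exp ((l + c) / 2 * s))) := by
          apply mul_le_mul_of_nonneg_left _ (abs_nonneg s)
          exact mul_le_mul_of_nonneg_left hb (hnn s)
    _ = |s| * a s * Real.exp (l / 2 * s) + |s| * a s * Real.exp ((l + c) / 2 * s) := by ring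
  · -- deriv
    have h1 : HasDerivAt (fun y : ℝ => y * s) s x := hasDerivAt_mul_const s
    have h2 := (h1.exp).const_mul (a s)
    have : a s * (Real.exp (x * s) * s) = s * (a s * Real.exp (x * s)) := by ring
    rw [this] at h2
    exact h2

lemma hasDerivAt_G (κp m : ℝ) (ha : Integrable a) (hnn : ∀ s, 0 ≤ a s) {l c : ℝ}
    (hl : 0 < l) (hlc : l < c) (hc : c ∈ lapSet a) :
    HasDerivAt (Gfun κp m a) ((m - Tfun κp a l) / l ^ 2) l := by
  have hA := hasDerivAt_A ha hnn hl hlc hc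
  have h1 : HasDerivAt (fun x => κp * (∫ s, a s * Real.exp (x * s)) - m)
      (κp * ∫ s, s * a s * Real.exp (l * s)) l := (hA.const_mul κp).sub_const m
  have h2 := h1.div (hasDerivAt_id l) hl.ne'
  have hT := Tfun_eq (a := a) κp (mem_lapSet_of_le ha hnn hc hl hlc.le).2
    (integrable_mul_exp ha hnn hl hlc hc)
  have heq : (m - Tfun κp a l) / l ^ 2 =
      (κp * (∫ s, s * a s * Real.exp (l * s)) * l -
        (κp * (∫ s, a s * Real.exp (l * s)) - m) * 1) / l ^ 2 := by
    rw [hT]; ring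
  rw [heq]
  exact h2

lemma contOn_A (ha : Integrable a) (hnn : ∀ s, 0 ≤ a s) {l₁ σ0 : ℝ}
    (h0 : 0 ≤ l₁) (hσ : σ0 ∈ lapSet a) :
    ContinuousOn (fun x => ∫ s, a s * Real.exp (x * s)) (Icc l₁ σ0) := by
  apply continuousOn_of_dominated (bound := fun s => a s + a s * Real.exp (σ0 * s))
  · exact fun x _ => aesm_mul_exp ha x
  · intro x hx
    refine ae_of_all _ fun s => ?_
    have hb := exp_le_add (h0.trans hx.1) hx.2 s
    rw [zero_mul, Real.exp_zero] at hb
    calc ‖a s * Real.exp (x * s)‖ = a s * Real.exp (x * s) := by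
          rw [Real.norm_eq_abs, abs_of_nonneg (mul_nonneg (hnn s) (Real.exp_pos _).le)]
    _ ≤ a s * (1 + Real.exp (σ0 * s)) := mul_le_mul_of_nonneg_left hb (hnn s)
    _ = a s + a s * Real.exp (σ0 * s) := by ring
  · exact ha.add hσ.2
  · refine ae_of_all _ fun s => Continuous.continuousOn ?_
    exact continuous_const.mul (Real.continuous_exp.comp (continuous_id.mul continuous_const))

lemma contOn_G (κp m : ℝ) (ha : Integrable a) (hnn : ∀ s, 0 ≤ a s) {l₁ σ0 : ℝ}
    (h0 : 0 < l₁) (hσ : σ0 ∈ lapSet a) :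
    ContinuousOn (Gfun κp m a) (Icc l₁ σ0) := by
  unfold Gfun
  exact ((continuousOn_const.mul (contOn_A ha hnn h0.le hσ)).sub continuousOn_const).div
    continuousOn_id (fun x hx => (h0.trans_le hx.1).ne')

lemma one_sub_mul_exp_hasDeriv (s t : ℝ) :
    HasDerivAt (fun t => (1 - t * s) * Real.exp (t * s))
      (-(t * s ^ 2 * Real.exp (t * s))) t := by
  have h1 : HasDerivAt (fun t : ℝ => 1 - t * s) (-s) t :=
    (hasDerivAt_mul_const s).const_sub 1
  have h2 : HasDerivAt (fun t : ℝ => Real.exp (t * s)) (Real.exp (t * s) * s) t :=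
    (hasDerivAt_mul_const s).exp
  have h3 := h1.mul h2
  refine h3.congr_deriv ?_
  ring

lemma one_sub_mul_exp_anti {s l l' : ℝ} (hl : 0 < l) (hll' : l ≤ l') :
    (1 - l' * s) * Real.exp (l' * s) ≤ (1 - l * s) * Real.exp (l * s) := by
  rcases eq_or_lt_of_le hll' with rfl | h
  · exact le_refl _
  have key : AntitoneOn (fun t => (1 - t * s) * Real.exp (t * s)) (Icc l l') := by
    apply antitoneOn_of_deriv_nonpos (convex_Icc _ _)
    · exact Continuous.continuousOn (by fun_prop)
    · exact fun t _ => (one_sub_mul_exp_hasDeriv s t).differentiableAt.differentiableWithinAt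
    · intro t ht
      rw [interior_Icc] at ht
      rw [(one_sub_mul_exp_hasDeriv s t).deriv]
      have ht0 : 0 < t := hl.trans ht.1
      have : 0 ≤ t * s ^ 2 * Real.exp (t * s) :=
        mul_nonneg (mul_nonneg ht0.le (sq_nonneg _)) (Real.exp_pos _).le
      linarith
  exact key ⟨le_refl _, hll'⟩ ⟨hll', le_refl _⟩ hll'

lemma T_anti (κp : ℝ) (hκ : 0 ≤ κp) (hnn : ∀ s, 0 ≤ a s) {l l' : ℝ}
    (hl : 0 < l) (hll' : l ≤ l')
    (hint : Integrable (fun s => (1 - l * s) * a s * Real.exp (l * s)))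
    (hint' : Integrable (fun s => (1 - l' * s) * a s * Real.exp (l' * s))) :
    Tfun κp a l' ≤ Tfun κp a l := by
  unfold Tfun
  refine mul_le_mul_of_nonneg_left (integral_mono hint' hint fun s => ?_) hκ
  have h := mul_le_mul_of_nonneg_left (one_sub_mul_exp_anti (s := s) hl hll') (hnn s)
  calc (1 - l' * s) * a s * Real.exp (l' * s)
      = a s * ((1 - l' * s) * Real.exp (l' * s)) := by ring
  _ ≤ a s * ((1 - l * s) * Real.exp (l * s)) := h
  _ = (1 - l * s) * a s * Real.exp (l * s) := by ring

lemma integrable_smul_exp_of_T (hnn : ∀ s, 0 ≤ a s) {σ0 : ℝ} (hσpos : 0 < σ0)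
    (hA : Integrable (fun s => a s * Real.exp (σ0 * s)))
    (hT : Integrable (fun s => (1 - σ0 * s) * a s * Real.exp (σ0 * s))) :
    Integrable (fun s => s * a s * Real.exp (σ0 * s)) := by
  refine ((hA.sub hT).const_mul (1 / σ0)).congr (ae_of_all _ fun s => ?_)
  simp only [Pi.sub_apply]
  field_simp
  ring

lemma tendsto_T_left (κp : ℝ) (ha : Integrable a) (hnn : ∀ s, 0 ≤ a s) {σ0 : ℝ}
    (hσpos : 0 < σ0) (hσ : σ0 ∈ lapSet a)
    (hT : Integrable (fun s => (1 - σ0 * s) * a s * Real.exp (σ0 * s))) :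
    Tendsto (fun l => Tfun κp a l) (𝓝[<] σ0) (𝓝 (Tfun κp a σ0)) := by
  unfold Tfun
  apply Tendsto.const_mul
  have h2 : σ0 / 2 < σ0 := by linarith
  have h2' : (0:ℝ) < σ0 / 2 := by linarith
  have hmemIoo : Ioo (σ0 / 2) σ0 ∈ 𝓝[<] σ0 := Ioo_mem_nhdsLT_of_mem ⟨h2, le_refl _⟩
  have hi4 : Integrable (fun s => |s| * a s * Real.exp (σ0 * s)) := by
    refine (integrable_smul_exp_of_T hnn hσpos hσ.2 hT).abs.congr (ae_of_all _ fun s => ?_)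
    show |s * a s * Real.exp (σ0 * s)| = |s| * a s * Real.exp (σ0 * s)
    rw [abs_mul, abs_mul, abs_of_nonneg (hnn s), abs_of_nonneg (Real.exp_pos _).le]
  have hbound : Integrable (fun s =>
      (1 + σ0 * |s|) * (a s * (Real.exp (σ0 / 2 * s) + Real.exp (σ0 * s)))) := by
    have i1 := (mem_lapSet_of_le ha hnn hσ h2' h2.le).2
    have i2 := hσ.2
    have i3 := (integrable_abs_mul_exp ha hnn h2' h2 hσ).const_mul σ0
    have i4 := hi4.const_mul σ0
    refine (((i1.add i2).add i3).add i4).congr (ae_of_all _ fun s => by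
      simp only [Pi.add_apply]; ring)
  refine tendsto_integral_filter_of_dominated_convergence
    (F := fun (l : ℝ) (s : ℝ) => (1 - l * s) * a s * Real.exp (l * s))
    (f := fun s => (1 - σ0 * s) * a s * Real.exp (σ0 * s))
    (fun s => (1 + σ0 * |s|) * (a s * (Real.exp (σ0 / 2 * s) + Real.exp (σ0 * s))))
    (Eventually.of_forall fun l =>
      (((continuous_const.sub (continuous_const.mul continuous_id)).aestronglyMeasurable.mul
        ha.aestronglyMeasurable).mul
        (Real.continuous_exp.comp (continuous_const.mul continuous_id)).aestronglyMeasurable))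
    ?_ hbound ?_
  · filter_upwards [hmemIoo] with l hl
    refine ae_of_all _ fun s => ?_
    have hexp := exp_le_add hl.1.le hl.2.le s
    have h5 : |1 - l * s| ≤ 1 + σ0 * |s| := by
      calc |1 - l * s| ≤ |1| + |l * s| := abs_sub _ _
      _ = 1 + l * |s| := by rw [abs_one, abs_mul, abs_of_nonneg (h2'.trans hl.1).le]
      _ ≤ 1 + σ0 * |s| := by
            have := mul_le_mul_of_nonneg_right hl.2.le (abs_nonneg s)
            linarith
    calc ‖(1 - l * s) * a s * Real.exp (l * s)‖
        = |1 - l * s| * (a s * Real.exp (l * s)) := by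
          rw [Real.norm_eq_abs, abs_mul, abs_mul,
            abs_of_nonneg (hnn s), abs_of_nonneg (Real.exp_pos _).le, mul_assoc]
    _ ≤ (1 + σ0 * |s|) * (a s * Real.exp (l * s)) := by
          refine mul_le_mul_of_nonneg_right h5 ?_
          exact mul_nonneg (hnn s) (Real.exp_pos _).le
    _ ≤ (1 + σ0 * |s|) * (a s * (Real.exp (σ0 / 2 * s) + Real.exp (σ0 * s))) := by
          refine mul_le_mul_of_nonneg_left (mul_le_mul_of_nonneg_left hexp (hnn s)) ?_
          positivity
  · refine ae_of_all _ fun s => ?_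
    have hcont : Continuous fun l : ℝ => (1 - l * s) * a s * Real.exp (l * s) := by fun_prop
    exact (hcont.tendsto σ0).mono_left nhdsWithin_le_nhds

lemma integrable_pos_of_bound (ha : Integrable a) (hnn : ∀ s, 0 ≤ a s)
    {σ0 K : ℝ} {u : ℕ → ℝ}
    (hu : Tendsto u atTop (𝓝 σ0))
    (hint : ∀ n, Integrable (fun s => max s 0 * a s * Real.exp (u n * s)))
    (hbK : ∀ n, (∫ s, max s 0 * a s * Real.exp (u n * s)) ≤ K) :
    Integrable (fun s => max s 0 * a s * Real.exp (σ0 * s)) := by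
  set f : ℕ → ℝ → ENNReal := fun n s => ENNReal.ofReal (max s 0 * a s * Real.exp (u n * s))
    with hf
  have hnn' : ∀ (l : ℝ) (s : ℝ), 0 ≤ max s 0 * a s * Real.exp (l * s) := fun l s =>
    mul_nonneg (mul_nonneg (le_max_right _ _) (hnn s)) (Real.exp_pos _).le
  have hpt : ∀ s, Tendsto (fun n => f n s) atTop
      (𝓝 (ENNReal.ofReal (max s 0 * a s * Real.exp (σ0 * s)))) := by
    intro s
    apply (ENNReal.continuous_ofReal.tendsto _).comp
    have hcont : Continuous fun x : ℝ => max s 0 * a s * Real.exp (x * s) := by fun_prop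
    exact (hcont.tendsto σ0).comp hu
  have hmeas : ∀ n, AEMeasurable (f n) volume := fun n =>
    ENNReal.measurable_ofReal.comp_aemeasurable (hint n).aestronglyMeasurable.aemeasurable
  have fatou := lintegral_liminf_le' (u := atTop) hmeas
  have heq : (fun s => liminf (fun n => f n s) atTop) =
      fun s => ENNReal.ofReal (max s 0 * a s * Real.exp (σ0 * s)) :=
    funext fun s => (hpt s).liminf_eq
  rw [heq] at fatou
  have hle : ∀ n, (∫⁻ s, f n s) ≤ ENNReal.ofReal K := fun n => by
    rw [hf]
    rw [← ofReal_integral_eq_lintegral_ofReal (hint n) (ae_of_all _ fun s => hnn' _ s)]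
    exact ENNReal.ofReal_le_ofReal (hbK n)
  have hlim : liminf (fun n => ∫⁻ s, f n s) atTop ≤ ENNReal.ofReal K := by
    have h := Filter.liminf_le_liminf (f := (atTop : Filter ℕ))
      (u := fun n => ∫⁻ s, f n s) (v := fun _ => ENNReal.ofReal K)
      (Eventually.of_forall hle)
    rwa [liminf_const] at h
  have hfin : (∫⁻ s, ENNReal.ofReal (max s 0 * a s * Real.exp (σ0 * s))) < ⊤ :=
    (fatou.trans hlim).trans_lt ENNReal.ofReal_lt_top
  refine ⟨((continuous_id.max continuous_const).aestronglyMeasurable.mul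
      ha.aestronglyMeasurable).mul
      (Real.continuous_exp.comp (continuous_const.mul continuous_id)).aestronglyMeasurable, ?_⟩
  rw [hasFiniteIntegral_iff_ofReal (ae_of_all _ fun s => hnn' _ s)]
  exact hfin

end MVA

/-- the unique minimizer `λ_*` of `G` satisfies `λ_* < σ(a)` iff `a` is of
class `V` (in which case `G'(λ_*) = 0`), and `λ_* = σ(a)` iff `a` is of class `W`
(in which case `G'(λ) → (m - T(σ))/σ² ≤ 0` as `λ → σ−`). -/
theorem minimizer_vs_abscissa
    (κp m : ℝ) (hm : 0 < m) (hκ : m < κp)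
    (a : ℝ → ℝ) (ha_int : Integrable a) (ha_nonneg : ∀ s, 0 ≤ a s)
    (ha_one : (∫ s, a s) = 1) (ha_bdd : ∃ C, ∀ s, a s ≤ C)
    (ha_mom : Integrable (fun s => s * a s))
    (ha_absc : (lapSet a).Nonempty)
    (ha_nondeg : ∃ r ≥ (0:ℝ), ∃ ρ₀ > (0:ℝ), ∃ δ₀ > (0:ℝ),
      ∀ᵐ s ∂(volume : Measure ℝ), s ∈ Set.Icc (r - δ₀) (r + δ₀) → ρ₀ ≤ a s)
    (lstar : ℝ) (hl_mem : lstar ∈ lapSet a)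
    (hl_min : ∀ l ∈ lapSet a, Gfun κp m a lstar ≤ Gfun κp m a l)
    (hl_uniq : ∀ l ∈ lapSet a,
      (∀ l' ∈ lapSet a, Gfun κp m a l ≤ Gfun κp m a l') → l = lstar) :
    ((lstar : EReal) < lapAbsc a ↔ VClass κp m a) ∧
    ((lstar : EReal) < lapAbsc a → deriv (Gfun κp m a) lstar = 0) ∧
    ((lstar : EReal) = lapAbsc a ↔ WClass κp m a) ∧
    (WClass κp m a →
      Tendsto (deriv (Gfun κp m a))
        (nhdsWithin (lapAbsc a).toReal (Set.Iio (lapAbsc a).toReal))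
        (nhds ((m - Tfun κp a (lapAbsc a).toReal) / ((lapAbsc a).toReal) ^ 2)) ∧
      (m - Tfun κp a (lapAbsc a).toReal) / ((lapAbsc a).toReal) ^ 2 ≤ 0) := by
  classical
  have hκ0 : 0 < κp := lt_trans hm hκ
  have hlpos : 0 < lstar := hl_mem.1
  have hle : (lstar : EReal) ≤ lapAbsc a := le_sSup ⟨lstar, hl_mem, rfl⟩
  have hσbot : lapAbsc a ≠ ⊥ := by
    intro h
    rw [h, le_bot_iff] at hle
    exact (EReal.coe_ne_bot lstar) hle
  -- W implies lstar = sigma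
  have hWQ : WClass κp m a → (lstar : EReal) = lapAbsc a := by
    intro hW
    obtain ⟨hfin, hAint, hTint, hmT⟩ := hW
    set σ0 := (lapAbsc a).toReal with hσ0
    have hσe : ((σ0 : ℝ) : EReal) = lapAbsc a := EReal.coe_toReal hfin.ne hσbot
    have hls : lstar ≤ σ0 := by
      have h1 := hle
      rw [← hσe] at h1
      exact_mod_cast h1
    have hσpos : 0 < σ0 := lt_of_lt_of_le hlpos hls
    have hσmem : σ0 ∈ lapSet a := ⟨hσpos, hAint⟩
    have hmin : ∀ l ∈ lapSet a, Gfun κp m a σ0 ≤ Gfun κp m a l := by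
      intro l hl
      have hlσ : l ≤ σ0 := by
        have h1 : (l : EReal) ≤ lapAbsc a := le_sSup ⟨l, hl, rfl⟩
        rw [← hσe] at h1
        exact_mod_cast h1
      rcases eq_or_lt_of_le hlσ with rfl | hlt
      · exact le_refl _
      have hanti : AntitoneOn (Gfun κp m a) (Icc l σ0) := by
        apply antitoneOn_of_deriv_nonpos (convex_Icc _ _)
          (MVA.contOn_G κp m ha_int ha_nonneg hl.1 hσmem)
        · intro x hx
          rw [interior_Icc] at hx
          exact (MVA.hasDerivAt_G κp m ha_int ha_nonneg (hl.1.trans hx.1) hx.2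
            hσmem).differentiableAt.differentiableWithinAt
        · intro x hx
          rw [interior_Icc] at hx
          have hx0 : 0 < x := hl.1.trans hx.1
          rw [(MVA.hasDerivAt_G κp m ha_int ha_nonneg hx0 hx.2 hσmem).deriv]
          apply div_nonpos_of_nonpos_of_nonneg _ (sq_nonneg x)
          rw [sub_nonpos]
          refine hmT.trans (MVA.T_anti κp hκ0.le ha_nonneg hx0 hx.2.le ?_ hTint)
          exact MVA.integrable_Tint ha_int ha_nonneg hx0 hx.2 hσmem
      exact hanti (left_mem_Icc.2 hlσ) (right_mem_Icc.2 hlσ) hlσ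
    have huniq := hl_uniq σ0 hσmem hmin
    rw [← hσe]
    exact_mod_cast huniq.symm
  -- lstar = sigma implies W
  have hQW : (lstar : EReal) = lapAbsc a → WClass κp m a := by
    intro hQ
    have hfin : lapAbsc a < ⊤ := hQ ▸ EReal.coe_lt_top lstar
    set σ0 := (lapAbsc a).toReal with hσ0
    have hσ0eq : σ0 = lstar := by rw [hσ0, ← hQ]; exact EReal.toReal_coe lstar
    have hσpos : 0 < σ0 := hσ0eq ▸ hlpos
    have hσmem : σ0 ∈ lapSet a := by rw [hσ0eq]; exact hl_mem
    have hAint := hσmem.2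
    -- Step 1: m ≤ T l for all interior l
    have hstep1 : ∀ l, 0 < l → l < σ0 → m ≤ Tfun κp a l := by
      intro l hl0 hlσ
      by_contra hcon
      push_neg at hcon
      have hmono : StrictMonoOn (Gfun κp m a) (Icc l σ0) := by
        apply strictMonoOn_of_deriv_pos (convex_Icc _ _)
          (MVA.contOn_G κp m ha_int ha_nonneg hl0 hσmem)
        intro x hx
        rw [interior_Icc] at hx
        have hx0 : 0 < x := hl0.trans hx.1
        rw [(MVA.hasDerivAt_G κp m ha_int ha_nonneg hx0 hx.2 hσmem).deriv]
        apply div_pos _ (by positivity)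
        have hTx : Tfun κp a x ≤ Tfun κp a l :=
          MVA.T_anti κp hκ0.le ha_nonneg hl0 hx.1.le
            (MVA.integrable_Tint ha_int ha_nonneg hl0 hlσ hσmem)
            (MVA.integrable_Tint ha_int ha_nonneg hx0 hx.2 hσmem)
        linarith
      have h1 : Gfun κp m a l < Gfun κp m a σ0 :=
        hmono (left_mem_Icc.2 hlσ.le) (right_mem_Icc.2 hlσ.le) hlσ
      have h2 : Gfun κp m a σ0 ≤ Gfun κp m a l := by
        rw [hσ0eq]
        exact hl_min l (MVA.mem_lapSet_of_le ha_int ha_nonneg hσmem hl0 hlσ.le)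
      linarith
    -- Step 2: integrability of s * a * exp(σ0 s)
    set l₁ : ℝ := σ0 / 2 with hl₁
    have hl₁pos : 0 < l₁ := by rw [hl₁]; positivity
    have hl₁lt : l₁ < σ0 := by rw [hl₁]; linarith
    have hQvint : Integrable (fun s => |s| * a s * Real.exp (l₁ * s)) :=
      MVA.integrable_abs_mul_exp ha_int ha_nonneg hl₁pos hl₁lt hσmem
    set Amax : ℝ := 1 + ∫ s, a s * Real.exp (σ0 * s) with hAmaxdef
    have hAmax : ∀ l, 0 < l → l ≤ σ0 → (∫ s, a s * Real.exp (l * s)) ≤ Amax := by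
      intro l h0 hlσ
      have hint := (MVA.mem_lapSet_of_le ha_int ha_nonneg hσmem h0 hlσ).2
      have h1 : (∫ s, a s * Real.exp (l * s)) ≤ ∫ s, (a s + a s * Real.exp (σ0 * s)) := by
        apply integral_mono hint (ha_int.add hAint)
        intro s
        have hb := MVA.exp_le_add h0.le hlσ s
        rw [zero_mul, Real.exp_zero] at hb
        calc a s * Real.exp (l * s) ≤ a s * (1 + Real.exp (σ0 * s)) :=
              mul_le_mul_of_nonneg_left hb (ha_nonneg s)
        _ = a s + a s * Real.exp (σ0 * s) := by ring
      rwa [integral_add ha_int hAint, ha_one] at h1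
    have hAmax0 : 0 ≤ Amax := by
      have h0 : (0:ℝ) ≤ ∫ s, a s * Real.exp (σ0 * s) :=
        integral_nonneg fun s => mul_nonneg (ha_nonneg s) (Real.exp_pos _).le
      rw [hAmaxdef]; linarith
    have hA'bd : ∀ l, l₁ ≤ l → l < σ0 → (∫ s, s * a s * Real.exp (l * s)) ≤ Amax / l₁ := by
      intro l hll₁ hlσ
      have hl0 : 0 < l := hl₁pos.trans_le hll₁
      have hAl := (MVA.mem_lapSet_of_le ha_int ha_nonneg hσmem hl0 hlσ.le).2
      have hsl := MVA.integrable_mul_exp ha_int ha_nonneg hl0 hlσ hσmem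
      have hT := hstep1 l hl0 hlσ
      rw [MVA.Tfun_eq κp hAl hsl] at hT
      have h1 : l * (∫ s, s * a s * Real.exp (l * s)) ≤ ∫ s, a s * Real.exp (l * s) := by
        by_contra hcon2
        push_neg at hcon2
        have hneg : κp * ((∫ s, a s * Real.exp (l * s)) -
            l * ∫ s, s * a s * Real.exp (l * s)) < 0 :=
          mul_neg_of_pos_of_neg hκ0 (by linarith)
        linarith
      have h2 : l * (∫ s, s * a s * Real.exp (l * s)) ≤ Amax := h1.trans (hAmax l hl0 hlσ.le)
      calc (∫ s, s * a s * Real.exp (l * s)) ≤ Amax / l := by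
            rw [le_div_iff₀ hl0]; linarith
      _ ≤ Amax / l₁ := div_le_div_of_nonneg_left hAmax0 hl₁pos hll₁
    have hnegint : ∀ l, 0 < l → l < σ0 →
        Integrable (fun s => max (-s) 0 * a s * Real.exp (l * s)) := by
      intro l hl0 hlσ
      refine (MVA.integrable_abs_mul_exp ha_int ha_nonneg hl0 hlσ hσmem).mono
        (((continuous_neg.max continuous_const).aestronglyMeasurable.mul
          ha_int.aestronglyMeasurable).mul
          (Real.continuous_exp.comp (continuous_const.mul continuous_id)).aestronglyMeasurable)
        (ae_of_all _ fun s => ?_)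
      have hn1 : (0:ℝ) ≤ max (-s) 0 := le_max_right _ _
      have hn2 : max (-s) 0 ≤ |s| := by
        rcases le_or_gt 0 s with h | h
        · rw [max_eq_right (by linarith : -s ≤ (0:ℝ))]; exact abs_nonneg s
        · rw [max_eq_left (by linarith : (0:ℝ) ≤ -s), abs_of_neg h]
      rw [Real.norm_eq_abs, Real.norm_eq_abs,
        abs_of_nonneg (mul_nonneg (mul_nonneg hn1 (ha_nonneg s)) (Real.exp_pos _).le),
        abs_of_nonneg (mul_nonneg (mul_nonneg (abs_nonneg s) (ha_nonneg s)) (Real.exp_pos _).le)]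
      exact mul_le_mul_of_nonneg_right
        (mul_le_mul_of_nonneg_right hn2 (ha_nonneg s)) (Real.exp_pos _).le
    have hposint : ∀ l, 0 < l → l < σ0 →
        Integrable (fun s => max s 0 * a s * Real.exp (l * s)) := by
      intro l hl0 hlσ
      refine (MVA.integrable_abs_mul_exp ha_int ha_nonneg hl0 hlσ hσmem).mono
        (((continuous_id.max continuous_const).aestronglyMeasurable.mul
          ha_int.aestronglyMeasurable).mul
          (Real.continuous_exp.comp (continuous_const.mul continuous_id)).aestronglyMeasurable)
        (ae_of_all _ fun s => ?_)
      have hn1 : (0:ℝ) ≤ max s 0 := le_max_right _ _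
      have hn2 : max s 0 ≤ |s| := by
        rcases le_or_gt 0 s with h | h
        · rw [max_eq_left h]; exact le_abs_self s
        · rw [max_eq_right h.le]; exact abs_nonneg s
      rw [Real.norm_eq_abs, Real.norm_eq_abs,
        abs_of_nonneg (mul_nonneg (mul_nonneg hn1 (ha_nonneg s)) (Real.exp_pos _).le),
        abs_of_nonneg (mul_nonneg (mul_nonneg (abs_nonneg s) (ha_nonneg s)) (Real.exp_pos _).le)]
      exact mul_le_mul_of_nonneg_right
        (mul_le_mul_of_nonneg_right hn2 (ha_nonneg s)) (Real.exp_pos _).le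
    set Qv : ℝ := ∫ s, |s| * a s * Real.exp (l₁ * s) with hQvdef
    have hnegbd : ∀ l, l₁ ≤ l → l < σ0 →
        (∫ s, max (-s) 0 * a s * Real.exp (l * s)) ≤ Qv := by
      intro l hll₁ hlσ
      have hl0 : 0 < l := hl₁pos.trans_le hll₁
      apply integral_mono (hnegint l hl0 hlσ) hQvint
      intro s
      show max (-s) 0 * a s * Real.exp (l * s) ≤ |s| * a s * Real.exp (l₁ * s)
      rcases le_or_gt s 0 with hs | hs
      · rw [max_eq_left (by linarith : (0:ℝ) ≤ -s)]
        have hexp : Real.exp (l * s) ≤ Real.exp (l₁ * s) :=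
          Real.exp_le_exp.2 (mul_le_mul_of_nonpos_right hll₁ hs)
        calc -s * a s * Real.exp (l * s) ≤ -s * a s * Real.exp (l₁ * s) :=
              mul_le_mul_of_nonneg_left hexp (mul_nonneg (by linarith) (ha_nonneg s))
        _ = |s| * a s * Real.exp (l₁ * s) := by rw [abs_of_nonpos hs]
      · rw [max_eq_right (by linarith : -s ≤ (0:ℝ)), zero_mul, zero_mul]
        exact mul_nonneg (mul_nonneg (abs_nonneg s) (ha_nonneg s)) (Real.exp_pos _).le
    have hsplit : ∀ l, 0 < l → l < σ0 → (∫ s, max s 0 * a s * Real.exp (l * s)) =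
        (∫ s, s * a s * Real.exp (l * s)) + ∫ s, max (-s) 0 * a s * Real.exp (l * s) := by
      intro l hl0 hlσ
      rw [← integral_add (MVA.integrable_mul_exp ha_int ha_nonneg hl0 hlσ hσmem)
        (hnegint l hl0 hlσ)]
      apply integral_congr_ae (ae_of_all _ fun s => ?_)
      have hmax : max s 0 = s + max (-s) 0 := by
        rcases le_or_gt 0 s with h | h
        · rw [max_eq_left h, max_eq_right (by linarith : -s ≤ (0:ℝ))]; ring
        · rw [max_eq_right h.le, max_eq_left (by linarith : (0:ℝ) ≤ -s)]; ring
      rw [hmax]; ring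
    set u : ℕ → ℝ := fun n => σ0 - l₁ * (1 / ((n : ℝ) + 1)) with hu
    have humem : ∀ n : ℕ, l₁ ≤ u n ∧ u n < σ0 := by
      intro n
      have h1 : (0:ℝ) < (n : ℝ) + 1 := by positivity
      have h2 : l₁ * (1 / ((n : ℝ) + 1)) ≤ l₁ * 1 := by
        apply mul_le_mul_of_nonneg_left _ hl₁pos.le
        rw [div_le_one h1]; linarith
      have h3 : 0 < l₁ * (1 / ((n : ℝ) + 1)) := by positivity
      have h4 : σ0 - l₁ = l₁ := by rw [hl₁]; ring
      constructor
      · rw [hu]; simp only; linarith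
      · rw [hu]; simp only; linarith
    have hulim : Tendsto u atTop (𝓝 σ0) := by
      rw [hu]
      have h0 := tendsto_one_div_add_atTop_nhds_zero_nat.const_mul l₁
      simpa using tendsto_const_nhds.sub h0
    have hbK : ∀ n, (∫ s, max s 0 * a s * Real.exp (u n * s)) ≤ Amax / l₁ + Qv := by
      intro n
      obtain ⟨h1, h2⟩ := humem n
      have hl0 : 0 < u n := hl₁pos.trans_le h1
      rw [hsplit (u n) hl0 h2]
      exact add_le_add (hA'bd (u n) h1 h2) (hnegbd (u n) h1 h2)
    have hposσ : Integrable (fun s => max s 0 * a s * Real.exp (σ0 * s)) :=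
      MVA.integrable_pos_of_bound ha_int ha_nonneg hulim
        (fun n => hposint _ (hl₁pos.trans_le (humem n).1) (humem n).2) hbK
    have hnegσ : Integrable (fun s => max (-s) 0 * a s * Real.exp (σ0 * s)) := by
      refine hQvint.mono
        (((continuous_neg.max continuous_const).aestronglyMeasurable.mul
          ha_int.aestronglyMeasurable).mul
          (Real.continuous_exp.comp (continuous_const.mul continuous_id)).aestronglyMeasurable)
        (ae_of_all _ fun s => ?_)
      have hn1 : (0:ℝ) ≤ max (-s) 0 := le_max_right _ _
      rw [Real.norm_eq_abs, Real.norm_eq_abs,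
        abs_of_nonneg (mul_nonneg (mul_nonneg hn1 (ha_nonneg s)) (Real.exp_pos _).le),
        abs_of_nonneg (mul_nonneg (mul_nonneg (abs_nonneg s) (ha_nonneg s)) (Real.exp_pos _).le)]
      rcases le_or_gt s 0 with hs | hs
      · have hexp : Real.exp (σ0 * s) ≤ Real.exp (l₁ * s) :=
          Real.exp_le_exp.2 (mul_le_mul_of_nonpos_right hl₁lt.le hs)
        have hn2 : max (-s) 0 = |s| := by
          rw [max_eq_left (by linarith : (0:ℝ) ≤ -s), abs_of_nonpos hs]
        rw [hn2]
        exact mul_le_mul_of_nonneg_left hexp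
          (mul_nonneg (abs_nonneg s) (ha_nonneg s))
      · rw [max_eq_right (by linarith : -s ≤ (0:ℝ)), zero_mul, zero_mul]
        exact mul_nonneg (mul_nonneg (abs_nonneg s) (ha_nonneg s)) (Real.exp_pos _).le
    have hsσ : Integrable (fun s => s * a s * Real.exp (σ0 * s)) := by
      refine (hposσ.sub hnegσ).congr (ae_of_all _ fun s => ?_)
      simp only [Pi.sub_apply]
      have hmax := max_zero_sub_max_neg_zero_eq_self s
      calc max s 0 * a s * Real.exp (σ0 * s) - max (-s) 0 * a s * Real.exp (σ0 * s)
          = (max s 0 - max (-s) 0) * a s * Real.exp (σ0 * s) := by ring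
      _ = s * a s * Real.exp (σ0 * s) := by rw [hmax]
    have hTσ : Integrable (fun s => (1 - σ0 * s) * a s * Real.exp (σ0 * s)) := by
      refine (hAint.sub (hsσ.const_mul σ0)).congr (ae_of_all _ fun s => ?_)
      simp only [Pi.sub_apply]; ring
    -- Step 3
    have htt := MVA.tendsto_T_left κp ha_int ha_nonneg hσpos hσmem hTσ
    have hev : ∀ᶠ l in nhdsWithin σ0 (Set.Iio σ0), m ≤ Tfun κp a l := by
      filter_upwards [Ioo_mem_nhdsLT_of_mem (⟨hσpos, le_refl σ0⟩ : σ0 ∈ Ioc 0 σ0)] with l hl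
      exact hstep1 l hl.1 hl.2
    have hmTσ : m ≤ Tfun κp a σ0 := ge_of_tendsto htt hev
    exact ⟨hfin, hAint, hTσ, hmTσ⟩
  -- totality and exclusivity of V and W
  have hVW_total : VClass κp m a ∨ WClass κp m a := by
    by_cases h1 : lapAbsc a = ⊤
    · exact Or.inl (Or.inl h1)
    have h1' : lapAbsc a < ⊤ := lt_top_iff_ne_top.2 h1
    by_cases h2 : Integrable (fun s => a s * Real.exp ((lapAbsc a).toReal * s))
    · by_cases h3 : Integrable
        (fun s => (1 - (lapAbsc a).toReal * s) * a s * Real.exp ((lapAbsc a).toReal * s))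
      · rcases lt_or_ge (Tfun κp a (lapAbsc a).toReal) m with h4 | h4
        · exact Or.inl (Or.inr (Or.inr ⟨h1', h2, Or.inr h4⟩))
        · exact Or.inr ⟨h1', h2, h3, h4⟩
      · exact Or.inl (Or.inr (Or.inr ⟨h1', h2, Or.inl h3⟩))
    · exact Or.inl (Or.inr (Or.inl ⟨h1', h2⟩))
  have hVW_excl : VClass κp m a → WClass κp m a → False := by
    intro hV hW
    rcases hV with h | ⟨_, h⟩ | ⟨_, _, h | h⟩
    · exact hW.1.ne h
    · exact h hW.2.1
    · exact h hW.2.2.1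
    · exact absurd hW.2.2.2 (not_le.2 h)
  refine ⟨?_, ?_, ⟨hQW, hWQ⟩, ?_⟩
  · constructor
    · intro hP
      rcases hVW_total with h | h
      · exact h
      · exact absurd (hWQ h) hP.ne
    · intro hV
      rcases hle.lt_or_eq with h | h
      · exact h
      · exact (hVW_excl hV (hQW h)).elim
  · intro hP
    obtain ⟨x, hx, hlt⟩ := lt_sSup_iff.1 hP
    obtain ⟨c, hc, rfl⟩ := hx
    have hltc : lstar < c := by
      have hlt' : (lstar : EReal) < (c : EReal) := hlt
      exact_mod_cast hlt'
    have hG := MVA.hasDerivAt_G κp m ha_int ha_nonneg hlpos hltc hc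
    have hloc : IsLocalMin (Gfun κp m a) lstar := by
      have hmem : Ioo (0:ℝ) c ∈ 𝓝 lstar := Ioo_mem_nhds hlpos hltc
      filter_upwards [hmem] with y hy
      exact hl_min y (MVA.mem_lapSet_of_le ha_int ha_nonneg hc hy.1 hy.2.le)
    rw [hG.deriv]
    exact hloc.hasDerivAt_eq_zero hG
  · intro hW
    obtain ⟨hfin, hAint, hTint, hmT⟩ := hW
    set σ0 := (lapAbsc a).toReal with hσ0
    have hσe : ((σ0 : ℝ) : EReal) = lapAbsc a := EReal.coe_toReal hfin.ne hσbot
    have hls : lstar ≤ σ0 := by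
      have h1 := hle
      rw [← hσe] at h1
      exact_mod_cast h1
    have hσpos : 0 < σ0 := lt_of_lt_of_le hlpos hls
    have hσmem : σ0 ∈ lapSet a := ⟨hσpos, hAint⟩
    have htt := MVA.tendsto_T_left κp ha_int ha_nonneg hσpos hσmem hTint
    have hden : Tendsto (fun l : ℝ => l ^ 2) (nhdsWithin σ0 (Set.Iio σ0)) (𝓝 (σ0 ^ 2)) :=
      ((continuous_pow 2).tendsto σ0).mono_left nhdsWithin_le_nhds
    have ht2 : Tendsto (fun l => (m - Tfun κp a l) / l ^ 2) (nhdsWithin σ0 (Set.Iio σ0))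
        (𝓝 ((m - Tfun κp a σ0) / σ0 ^ 2)) :=
      (tendsto_const_nhds.sub htt).div hden (by positivity)
    constructor
    · refine ht2.congr' ?_
      filter_upwards [Ioo_mem_nhdsLT_of_mem (⟨hσpos, le_refl σ0⟩ : σ0 ∈ Ioc 0 σ0)] with l hl
      exact ((MVA.hasDerivAt_G κp m ha_int ha_nonneg hl.1 hl.2 hσmem).deriv).symm
    · exact div_nonpos_of_nonpos_of_nonneg (by linarith) (sq_nonneg _)

end
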